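/- A skew decomposable permutation is an involution if and only if it has one of the following two forms: (i) 21[α₁,α₂] = α₁⊖α₂ where α₁ and α₂ are skew indecomposable and α₁ = α₂^{-1}; or (ii) 321[α₁,α₂,α₃] = α₁⊖α₂⊖α₃ where α₁ and α₃ are skew indecomposable, α₁ = α₃^{-1}, and α₂ is an involution. -/

import Mathlib

/-- `π` contains the pattern `σ`. -/
def Contains {n k : ℕ} (π : Equiv.Perm (Fin n)) (σ : Equiv.Perm (Fin k)) : Prop :=
  ∃ f : Fin k → Fin n, StrictMono f ∧ ∀ i j : Fin k, σ i < σ j ↔ π (f i) < π (f j)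

def IsInvolution {n : ℕ} (π : Equiv.Perm (Fin n)) : Prop := π⁻¹ = π

/-- direct sum of permutations -/
def directSum {m n : ℕ} (σ : Equiv.Perm (Fin m)) (τ : Equiv.Perm (Fin n)) :
    Equiv.Perm (Fin (m + n)) :=
  finSumFinEquiv.symm.trans ((Equiv.sumCongr σ τ).trans finSumFinEquiv)

/-- skew sum of permutations -/
def skewSum {m n : ℕ} (σ : Equiv.Perm (Fin m)) (τ : Equiv.Perm (Fin n)) :
    Equiv.Perm (Fin (m + n)) :=
  finSumFinEquiv.symm.trans ((Equiv.sumCongr σ τ).trans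
    ((Equiv.sumComm (Fin m) (Fin n)).trans (finSumFinEquiv.trans (finCongr (Nat.add_comm n m)))))

def SumDecomposable {n : ℕ} (π : Equiv.Perm (Fin n)) : Prop :=
  ∃ (a b : ℕ) (h : a + b = n), 0 < a ∧ 0 < b ∧
    ∃ (σ : Equiv.Perm (Fin a)) (τ : Equiv.Perm (Fin b)),
      π = (finCongr h).permCongr (directSum σ τ)

def SkewDecomposable {n : ℕ} (π : Equiv.Perm (Fin n)) : Prop :=
  ∃ (a b : ℕ) (h : a + b = n), 0 < a ∧ 0 < b ∧
    ∃ (σ : Equiv.Perm (Fin a)) (τ : Equiv.Perm (Fin b)),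
      π = (finCongr h).permCongr (skewSum σ τ)

/-- a set of contiguous indices/values -/
def SetContiguous {n : ℕ} (S : Set (Fin n)) : Prop :=
  ∀ ⦃i j k : Fin n⦄, i ∈ S → j ∈ S → i ≤ k → k ≤ j → k ∈ S

/-- an interval of the permutation `π` -/
def IsPermInterval {n : ℕ} (π : Equiv.Perm (Fin n)) (S : Set (Fin n)) : Prop :=
  SetContiguous S ∧ SetContiguous (π '' S)

/-- A permutation of length at least 2 is simple if all its intervals are trivial. -/
def IsSimple {n : ℕ} (π : Equiv.Perm (Fin n)) : Prop :=
  2 ≤ n ∧ ∀ S : Set (Fin n), IsPermInterval π S → S.ncard ≤ 1 ∨ S = Set.univ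

-- patterns (0-indexed one-line notation)
noncomputable def p123 : Equiv.Perm (Fin 3) := Equiv.ofBijective ![0, 1, 2] (by decide)
noncomputable def p132 : Equiv.Perm (Fin 3) := Equiv.ofBijective ![0, 2, 1] (by decide)
noncomputable def p213 : Equiv.Perm (Fin 3) := Equiv.ofBijective ![1, 0, 2] (by decide)
noncomputable def p1324 : Equiv.Perm (Fin 4) := Equiv.ofBijective ![0, 2, 1, 3] (by decide)
noncomputable def p1234 : Equiv.Perm (Fin 4) := Equiv.ofBijective ![0, 1, 2, 3] (by decide)
noncomputable def p1342 : Equiv.Perm (Fin 4) := Equiv.ofBijective ![0, 2, 3, 1] (by decide)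
noncomputable def p1423 : Equiv.Perm (Fin 4) := Equiv.ofBijective ![0, 3, 1, 2] (by decide)
noncomputable def p2341 : Equiv.Perm (Fin 4) := Equiv.ofBijective ![1, 2, 3, 0] (by decide)
noncomputable def p2413 : Equiv.Perm (Fin 4) := Equiv.ofBijective ![1, 3, 0, 2] (by decide)
noncomputable def p5274163 : Equiv.Perm (Fin 7) := Equiv.ofBijective ![4, 1, 6, 3, 0, 5, 2] (by decide)

-- the order-respecting equivalence between a lexicographic sigma of Fins and a Fin
noncomputable def finSigmaOrderEquiv {m : ℕ} (k : Fin m → ℕ) :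
    (Σₗ i : Fin m, Fin (k i)) ≃o Fin (∑ i, k i) :=
  (monoEquivOfFin (Σₗ i : Fin m, Fin (k i)) (by
    rw [Fintype.card_congr (ofLex : _ ≃ (Σ i : Fin m, Fin (k i)))]
    simp)).symm

/-- the inflation `σ[α 0, …, α (m-1)]` -/
noncomputable def inflation {m : ℕ} (σ : Equiv.Perm (Fin m)) (k : Fin m → ℕ)
    (α : ∀ i, Equiv.Perm (Fin (k i))) : Equiv.Perm (Fin (∑ i, k i)) :=
  ((finSigmaOrderEquiv k).toEquiv.symm.trans
    ((ofLex : (Σₗ i : Fin m, Fin (k i)) ≃ (Σ i : Fin m, Fin (k i))).trans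
      ((Equiv.sigmaCongr σ fun i =>
          (α i).trans (finCongr (congrArg k (σ.symm_apply_apply i).symm))).trans
        ((toLex : (Σ t : Fin m, Fin (k (σ.symm t))) ≃ (Σₗ t : Fin m, Fin (k (σ.symm t)))).trans
          ((finSigmaOrderEquiv fun t => k (σ.symm t)).toEquiv.trans
            (finCongr (Equiv.sum_comp σ.symm k)))))))

-- ===== auxiliary material =====

theorem Equiv.Perm.inv_apply_self {α : Type*} (f : Equiv.Perm α) (x : α) : f⁻¹ (f x) = x :=
  f.symm_apply_apply x

theorem Equiv.Perm.apply_inv_self {α : Type*} (f : Equiv.Perm α) (x : α) : f (f⁻¹ x) = x :=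
  f.apply_symm_apply x

lemma skewSum_apply_val {m n : ℕ} (σ : Equiv.Perm (Fin m)) (τ : Equiv.Perm (Fin n))
    (i : Fin (m + n)) :
    ((skewSum σ τ) i).val =
      if h : i.val < m then n + (σ ⟨i.val, h⟩).val
      else (τ ⟨i.val - m, by have := i.2; omega⟩).val := by
  rcases lt_or_ge i.val m with h | h
  · have e : finSumFinEquiv.symm i = Sum.inl ⟨i.val, h⟩ := by
      rw [Equiv.symm_apply_eq]; ext; simp
    rw [dif_pos h, skewSum]
    simp only [Equiv.trans_apply, e]
    simp [Nat.add_comm]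
  · have hlt : i.val - m < n := by have := i.2; omega
    have e : finSumFinEquiv.symm i = Sum.inr ⟨i.val - m, hlt⟩ := by
      rw [Equiv.symm_apply_eq]; ext; simp; omega
    rw [dif_neg (by omega), skewSum]
    simp only [Equiv.trans_apply, e]
    simp [Nat.add_comm]

lemma pcss_lt {a b n : ℕ} (h : a + b = n) (σ : Equiv.Perm (Fin a)) (τ : Equiv.Perm (Fin b))
    (i : Fin n) (hi : i.val < a) :
    (((finCongr h).permCongr (skewSum σ τ)) i).val = b + (σ ⟨i.val, hi⟩).val := by
  simp only [Equiv.permCongr_apply, finCongr_symm, finCongr_apply, Fin.coe_cast]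
  rw [skewSum_apply_val]
  simp [hi]

lemma pcss_ge {a b n : ℕ} (h : a + b = n) (σ : Equiv.Perm (Fin a)) (τ : Equiv.Perm (Fin b))
    (i : Fin n) (hi : a ≤ i.val) :
    (((finCongr h).permCongr (skewSum σ τ)) i).val
      = (τ ⟨i.val - a, by have := i.2; omega⟩).val := by
  simp only [Equiv.permCongr_apply, finCongr_symm, finCongr_apply, Fin.coe_cast]
  rw [skewSum_apply_val]
  simp [Nat.not_lt.mpr hi]

def Split {n : ℕ} (π : Equiv.Perm (Fin n)) (a : ℕ) : Prop :=
  ∀ i : Fin n, i.val < a ↔ n - a ≤ (π i).val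

lemma SkewDecomposable.exists_split {n : ℕ} {π : Equiv.Perm (Fin n)}
    (h : SkewDecomposable π) : ∃ a, 0 < a ∧ a < n ∧ Split π a := by
  obtain ⟨a, b, hab, ha, hb, σ, τ, rfl⟩ := h
  refine ⟨a, ha, by omega, fun i => ?_⟩
  rcases lt_or_ge i.val a with hi | hi
  · rw [pcss_lt hab σ τ i hi]
    have := (σ ⟨i.val, hi⟩).2
    constructor <;> intro <;> omega
  · rw [pcss_ge hab σ τ i hi]
    have := (τ ⟨i.val - a, by have := i.2; omega⟩).2
    constructor <;> intro <;> omega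

lemma isInvolution_iff_sq {n : ℕ} (π : Equiv.Perm (Fin n)) :
    IsInvolution π ↔ ∀ i, π (π i) = i := by
  constructor
  · intro h i
    have := Equiv.Perm.inv_apply_self π i
    rwa [h] at this
  · intro h
    have h1 : π * π = 1 := by
      apply Equiv.ext
      intro i
      simpa [Equiv.Perm.mul_apply] using h i
    exact mul_eq_one_iff_inv_eq.mp h1

lemma Split.flip {n : ℕ} {π : Equiv.Perm (Fin n)} (hinv : ∀ i, π (π i) = i)
    {a : ℕ} (ha : 0 < a) (han : a < n) (h : Split π a) : Split π (n - a) := by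
  intro i
  have h2 := h (π i)
  rw [hinv i] at h2
  have hi := i.2; have hpi := (π i).2
  omega

/-- a block of `π` occupying positions `[p, p+m)` with values `[v, v+m)` -/
def blockPerm {n : ℕ} (π : Equiv.Perm (Fin n)) (p v m : ℕ)
    (hp : p + m ≤ n) (hv : v + m ≤ n)
    (h1 : ∀ i : Fin n, p ≤ i.val → i.val < p + m → v ≤ (π i).val ∧ (π i).val < v + m)
    (h2 : ∀ i : Fin n, v ≤ i.val → i.val < v + m → p ≤ (π⁻¹ i).val ∧ (π⁻¹ i).val < p + m) :
    Equiv.Perm (Fin m) where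
  toFun j := ⟨(π ⟨p + j.val, by have := j.2; omega⟩).val - v, by
    have := h1 ⟨p + j.val, by have := j.2; omega⟩ (by simp) (by show _ + _ < _ + _; omega)
    omega⟩
  invFun j := ⟨(π⁻¹ ⟨v + j.val, by have := j.2; omega⟩).val - p, by
    have := h2 ⟨v + j.val, by have := j.2; omega⟩ (by simp) (by show _ + _ < _ + _; omega)
    omega⟩
  left_inv j := by
    apply Fin.ext
    simp only []
    have hj := j.2
    have hb := h1 ⟨p + j.val, by omega⟩ (by simp) (by show _ + _ < _ + _; omega)
    have e : (⟨v + ((π ⟨p + j.val, by omega⟩).val - v), by omega⟩ : Fin n)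
        = π ⟨p + j.val, by omega⟩ := Fin.ext (by show v + _ = _; omega)
    rw [e, Equiv.Perm.inv_apply_self]
    show p + j.val - p = j.val; omega
  right_inv j := by
    apply Fin.ext
    simp only []
    have hj := j.2
    have hb := h2 ⟨v + j.val, by omega⟩ (by simp) (by show _ + _ < _ + _; omega)
    have e : (⟨p + ((π⁻¹ ⟨v + j.val, by omega⟩).val - p), by omega⟩ : Fin n)
        = π⁻¹ ⟨v + j.val, by omega⟩ := Fin.ext (by show p + _ = _; omega)
    rw [e, Equiv.Perm.apply_inv_self]
    show v + j.val - v = j.val; omega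

lemma blockPerm_apply_val {n : ℕ} (π : Equiv.Perm (Fin n)) (p v m : ℕ)
    (hp : p + m ≤ n) (hv : v + m ≤ n) (h1) (h2) (j : Fin m) :
    (blockPerm π p v m hp hv h1 h2 j).val
      = (π ⟨p + j.val, by have := j.2; omega⟩).val - v := rfl

lemma blockPerm_inv_apply_val {n : ℕ} (π : Equiv.Perm (Fin n)) (p v m : ℕ)
    (hp : p + m ≤ n) (hv : v + m ≤ n) (h1) (h2) (j : Fin m) :
    ((blockPerm π p v m hp hv h1 h2)⁻¹ j).val
      = (π⁻¹ ⟨v + j.val, by have := j.2; omega⟩).val - p := rfl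

/-- A skew decomposable permutation is an involution iff it has the form `α ⊖ α⁻¹` with `α`
skew indecomposable, or the form `α ⊖ β ⊖ α⁻¹` with `α` skew indecomposable and `β` an
involution. -/
theorem skewDecomposable_involution_iff {n : ℕ} (π : Equiv.Perm (Fin n))
    (hπ : SkewDecomposable π) :
    IsInvolution π ↔
      ((∃ (m : ℕ) (h : m + m = n) (α : Equiv.Perm (Fin m)), 0 < m ∧
          ¬ SkewDecomposable α ∧ π = (finCongr h).permCongr (skewSum α α⁻¹)) ∨
        (∃ (m c : ℕ) (h : m + c + m = n) (α : Equiv.Perm (Fin m)) (β : Equiv.Perm (Fin c)),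
          0 < m ∧ 0 < c ∧ ¬ SkewDecomposable α ∧ IsInvolution β ∧
          π = (finCongr h).permCongr (skewSum (skewSum α β) α⁻¹))) := by
  constructor
  · intro hinv
    have hpinv : π⁻¹ = π := hinv
    have hinv' : ∀ i, π (π i) = i := (isInvolution_iff_sq π).mp hinv
    set S : Set ℕ := {a | 0 < a ∧ a < n ∧ Split π a} with hSdef
    have hSne : S.Nonempty := by
      obtain ⟨a, h1, h2, h3⟩ := hπ.exists_split
      exact ⟨a, h1, h2, h3⟩
    obtain ⟨hm0, hmn, hsplit⟩ := Nat.sInf_mem hSne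
    set m := sInf S with hmdef
    have hleast : ∀ a ∈ S, m ≤ a := fun a ha => Nat.sInf_le ha
    have hflip : Split π (n - m) := Split.flip hinv' hm0 hmn hsplit
    have hm2 : m ≤ n - m := by
      by_contra hc
      push_neg at hc
      have hmem : n - m ∈ S := ⟨by omega, by omega, hflip⟩
      have := hleast _ hmem; omega
    have key1 : ∀ i : Fin n, i.val < m ↔ n - m ≤ (π i).val := hsplit
    have key2 : ∀ i : Fin n, i.val < n - m ↔ m ≤ (π i).val := by
      intro i
      have h2 := hflip i
      have hin := i.2; have hpi := (π i).2
      omega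
    have hA1 : ∀ i : Fin n, 0 ≤ i.val → i.val < 0 + m →
        (n - m) ≤ (π i).val ∧ (π i).val < (n - m) + m := by
      intro i _ h
      have := (key1 i).mp (by omega)
      have := (π i).2
      omega
    have hA2 : ∀ i : Fin n, (n - m) ≤ i.val → i.val < (n - m) + m →
        0 ≤ (π⁻¹ i).val ∧ (π⁻¹ i).val < 0 + m := by
      intro i h _
      rw [hpinv]
      have := key2 i
      have := (π i).2
      omega
    set α := blockPerm π 0 (n - m) m (by omega) (by omega) hA1 hA2 with hαdef
    have hαv : ∀ j : Fin m, (α j).val = (π ⟨j.val, by have := j.2; omega⟩).val - (n - m) := by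
      intro j
      rw [hαdef, blockPerm_apply_val]
      have e : (⟨0 + j.val, by have := j.2; omega⟩ : Fin n)
          = ⟨j.val, by have := j.2; omega⟩ := Fin.ext (Nat.zero_add _)
      rw [e]
    have hαiv : ∀ j : Fin m, (α⁻¹ j).val
        = (π ⟨(n - m) + j.val, by have := j.2; omega⟩).val := by
      intro j
      rw [hαdef, blockPerm_inv_apply_val, hpinv, Nat.sub_zero]
    have hind : ¬ SkewDecomposable α := by
      intro hd
      obtain ⟨a, ha0, ham, hsp⟩ := hd.exists_split
      have hmem : a ∈ S := by
        refine ⟨ha0, by omega, fun i => ?_⟩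
        rcases lt_or_ge i.val m with hi | hi
        · have h3 := hsp ⟨i.val, hi⟩
          rw [hαv ⟨i.val, hi⟩] at h3
          have e : (⟨i.val, by omega⟩ : Fin n) = i := Fin.ext rfl
          rw [e] at h3
          have h4 := (key1 i).mp hi
          have := (π i).2
          omega
        · have h4 : (π i).val < n - m := by have := key1 i; omega
          have := i.2
          constructor <;> intro <;> omega
      have := hleast a hmem; omega
    rcases eq_or_lt_of_le hm2 with heq | hlt
    · -- n = 2m
      refine Or.inl ⟨m, by omega, α, hm0, hind, ?_⟩
      apply Equiv.ext
      intro i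
      refine Fin.ext ?_
      rcases lt_or_ge i.val m with hi | hi
      · rw [pcss_lt (by omega : m + m = n) α α⁻¹ i hi, hαv ⟨i.val, hi⟩]
        have e : (⟨i.val, by omega⟩ : Fin n) = i := Fin.ext rfl
        rw [e]
        have := (key1 i).mp hi
        have := (π i).2
        omega
      · rw [pcss_ge (by omega : m + m = n) α α⁻¹ i hi,
          hαiv ⟨i.val - m, by have := i.2; omega⟩]
        have e : (⟨(n - m) + (i.val - m), by have := i.2; omega⟩ : Fin n) = i :=
          Fin.ext (by show (n - m) + (i.val - m) = i.val; have := i.2; omega)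
        rw [e]
    · -- n > 2m : middle block
      have hc0 : 0 < n - m - m := by omega
      have hB1 : ∀ i : Fin n, m ≤ i.val → i.val < m + (n - m - m) →
          m ≤ (π i).val ∧ (π i).val < m + (n - m - m) := by
        intro i h1 h2
        have k1 := key1 i
        have k2 := key2 i
        omega
      have hB2 : ∀ i : Fin n, m ≤ i.val → i.val < m + (n - m - m) →
          m ≤ (π⁻¹ i).val ∧ (π⁻¹ i).val < m + (n - m - m) := by
        intro i h1 h2
        rw [hpinv]
        have k1 := key1 i
        have k2 := key2 i
        omega
      set β := blockPerm π m m (n - m - m) (by omega) (by omega) hB1 hB2 with hβdef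
      have hβv : ∀ j : Fin (n - m - m),
          (β j).val = (π ⟨m + j.val, by have := j.2; omega⟩).val - m := by
        intro j
        rw [hβdef, blockPerm_apply_val]
      have hβinv : IsInvolution β := by
        show β⁻¹ = β
        apply Equiv.ext
        intro j
        refine Fin.ext ?_
        rw [hβv j, hβdef, blockPerm_inv_apply_val, hpinv]
      refine Or.inr ⟨m, n - m - m, by omega, α, β, hm0, hc0, hind, hβinv, ?_⟩
      apply Equiv.ext
      intro i
      refine Fin.ext ?_
      rcases lt_or_ge i.val (m + (n - m - m)) with hi | hi
      · rw [pcss_lt (by omega : m + (n - m - m) + m = n) (skewSum α β) α⁻¹ i hi,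
          skewSum_apply_val]
        rcases lt_or_ge i.val m with hi2 | hi2
        · rw [dif_pos (show (⟨i.val, hi⟩ : Fin (m + (n - m - m))).val < m from hi2)]
          rw [hαv ⟨i.val, hi2⟩]
          have e : (⟨i.val, by omega⟩ : Fin n) = i := Fin.ext rfl
          rw [e]
          have := (key1 i).mp hi2
          have := (π i).2
          omega
        · rw [dif_neg (show ¬ (⟨i.val, hi⟩ : Fin (m + (n - m - m))).val < m from by
            simpa using Nat.not_lt.mpr hi2)]
          rw [hβv ⟨(⟨i.val, hi⟩ : Fin (m + (n - m - m))).val - m, by simp; omega⟩]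
          have e : (⟨m + ((⟨i.val, hi⟩ : Fin (m + (n - m - m))).val - m),
              by simp; omega⟩ : Fin n) = i := Fin.ext (by simp; omega)
          rw [e]
          have h5 := (key2 i).mp (by omega)
          omega
      · rw [pcss_ge (by omega : m + (n - m - m) + m = n) (skewSum α β) α⁻¹ i hi,
          hαiv ⟨i.val - (m + (n - m - m)), by have := i.2; omega⟩]
        have e : (⟨(n - m) + (i.val - (m + (n - m - m))), by have := i.2; omega⟩ : Fin n) = i :=
          Fin.ext (by show (n - m) + (i.val - (m + (n - m - m))) = i.val; have := i.2; omega)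
        rw [e]
  · rintro (⟨m, h, α, hm0, hind, rfl⟩ | ⟨m, c, h, α, β, hm0, hc0, hind, hβ, rfl⟩)
    · rw [isInvolution_iff_sq]
      intro i
      set ρ := (finCongr h).permCongr (skewSum α α⁻¹) with hρ
      refine Fin.ext ?_
      rcases lt_or_ge i.val m with hi | hi
      · have h1 : (ρ i).val = m + (α ⟨i.val, hi⟩).val := pcss_lt h α α⁻¹ i hi
        have h2 : m ≤ (ρ i).val := by omega
        rw [pcss_ge h α α⁻¹ (ρ i) h2]
        have e : (⟨(ρ i).val - m, by have := (ρ i).2; omega⟩ : Fin m) = α ⟨i.val, hi⟩ :=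
          Fin.ext (by show (ρ i).val - m = _; omega)
        rw [e, Equiv.Perm.inv_apply_self]
      · have pf : i.val - m < m := by have := i.2; omega
        have h1 : (ρ i).val = (α⁻¹ ⟨i.val - m, pf⟩).val := pcss_ge h α α⁻¹ i hi
        have h2 : (ρ i).val < m := by rw [h1]; exact (α⁻¹ _).2
        rw [pcss_lt h α α⁻¹ (ρ i) h2]
        have e : (⟨(ρ i).val, h2⟩ : Fin m) = α⁻¹ ⟨i.val - m, pf⟩ := Fin.ext h1
        rw [e, Equiv.Perm.apply_inv_self]
        show m + (i.val - m) = i.val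
        omega
    · rw [isInvolution_iff_sq]
      intro i
      have hβsq := (isInvolution_iff_sq β).mp hβ
      set ρ := (finCongr h).permCongr (skewSum (skewSum α β) α⁻¹) with hρ
      refine Fin.ext ?_
      rcases lt_or_ge i.val m with hi | hi
      · have hi' : i.val < m + c := by omega
        have h1 : (ρ i).val = m + (c + (α ⟨i.val, hi⟩).val) := by
          rw [pcss_lt h (skewSum α β) α⁻¹ i hi', skewSum_apply_val,
            dif_pos (show (⟨i.val, hi'⟩ : Fin (m + c)).val < m from hi)]
        have h2 : m + c ≤ (ρ i).val := by omega
        rw [pcss_ge h (skewSum α β) α⁻¹ (ρ i) h2]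
        have e : (⟨(ρ i).val - (m + c), by have := (ρ i).2; omega⟩ : Fin m)
            = α ⟨i.val, hi⟩ := Fin.ext (by show (ρ i).val - (m + c) = _; omega)
        rw [e, Equiv.Perm.inv_apply_self]
      · rcases lt_or_ge i.val (m + c) with hi2 | hi2
        · have pf : i.val - m < c := by omega
          have h1 : (ρ i).val = m + (β ⟨i.val - m, pf⟩).val := by
            rw [pcss_lt h (skewSum α β) α⁻¹ i hi2, skewSum_apply_val,
              dif_neg (show ¬ (⟨i.val, hi2⟩ : Fin (m + c)).val < m from Nat.not_lt.mpr hi)]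
          have hb := (β ⟨i.val - m, pf⟩).2
          have h2 : (ρ i).val < m + c := by omega
          rw [pcss_lt h (skewSum α β) α⁻¹ (ρ i) h2, skewSum_apply_val,
            dif_neg (show ¬ (⟨(ρ i).val, h2⟩ : Fin (m + c)).val < m from by
              show ¬ (ρ i).val < m; omega)]
          have e2 : (⟨(⟨(ρ i).val, h2⟩ : Fin (m + c)).val - m, by
              have := (⟨(ρ i).val, h2⟩ : Fin (m + c)).2; omega⟩ : Fin c)
              = β ⟨i.val - m, pf⟩ := Fin.ext (by show (ρ i).val - m = _; omega)
          rw [e2, hβsq]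
          show m + (i.val - m) = i.val
          omega
        · have pf : i.val - (m + c) < m := by have := i.2; omega
          have h1 : (ρ i).val = (α⁻¹ ⟨i.val - (m + c), pf⟩).val :=
            pcss_ge h (skewSum α β) α⁻¹ i hi2
          have ha := (α⁻¹ ⟨i.val - (m + c), pf⟩).2
          have h2 : (ρ i).val < m + c := by omega
          rw [pcss_lt h (skewSum α β) α⁻¹ (ρ i) h2, skewSum_apply_val,
            dif_pos (show (⟨(ρ i).val, h2⟩ : Fin (m + c)).val < m from by
              show (ρ i).val < m; omega)]
          have e : (⟨(⟨(ρ i).val, h2⟩ : Fin (m + c)).val, by show (ρ i).val < m; omega⟩ : Fin m)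
              = α⁻¹ ⟨i.val - (m + c), pf⟩ := Fin.ext h1
          rw [e, Equiv.Perm.apply_inv_self]
          show m + (c + (i.val - (m + c))) = i.val
          omega
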